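/- Let f(x) = (x−1)^6 and g(x) = (x²+1)³, let A, B ∈ GL₆(ℤ) be their companion matrices, and let v = (A⁻¹B − I)(e₆). Then v = (−6, 12, −20, 12, −6, 0), and the matrix γ = B²·A satisfies: the coefficient of e₆ in γ(v) lies in {1, −1, 2, −2}, and the three vectors v, γ(v), γ⁻¹(v) are linearly independent over ℚ. -/

import Mathlib

open Matrix Polynomial

/-- The companion matrix of a monic polynomial `p` of degree `n`: it sends
`e_i ↦ e_{i+1}` for `1 ≤ i ≤ n-1` (zero-indexed: column `j` is `e_{j+1}` when `j+1 < n`),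
and `e_n ↦ -(c_0 e_1 + c_1 e_2 + ⋯ + c_{n-1} e_n)`. -/
def companionMat (n : ℕ) (p : Polynomial ℤ) : Matrix (Fin n) (Fin n) ℤ :=
  Matrix.of fun i j =>
    if (j : ℕ) + 1 < n then (if (i : ℕ) = (j : ℕ) + 1 then 1 else 0) else -p.coeff (i : ℕ)

private lemma companionMat_eq (p : Polynomial ℤ) (c : Fin 6 → ℤ)
    (h : ∀ k : Fin 6, p.coeff (k : ℕ) = c k) :
    companionMat 6 p = Matrix.of fun i j : Fin 6 =>
      if (j : ℕ) + 1 < 6 then (if (i : ℕ) = (j : ℕ) + 1 then 1 else 0) else -c i := by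
  ext i j
  simp only [companionMat, Matrix.of_apply]
  rw [h i]

private def Amat : Matrix (Fin 6) (Fin 6) ℤ :=
  !![0,0,0,0,0,-1; 1,0,0,0,0,6; 0,1,0,0,0,-15; 0,0,1,0,0,20; 0,0,0,1,0,-15; 0,0,0,0,1,6]

private def Aimat : Matrix (Fin 6) (Fin 6) ℤ :=
  !![6,1,0,0,0,0; -15,0,1,0,0,0; 20,0,0,1,0,0; -15,0,0,0,1,0; 6,0,0,0,0,1; -1,0,0,0,0,0]

private def Bmat : Matrix (Fin 6) (Fin 6) ℤ :=
  !![0,0,0,0,0,-1; 1,0,0,0,0,0; 0,1,0,0,0,-3; 0,0,1,0,0,0; 0,0,0,1,0,-3; 0,0,0,0,1,0]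

private def Gmat : Matrix (Fin 6) (Fin 6) ℤ :=
  !![0,0,0,-1,0,15; 0,0,0,0,-1,-6; 0,0,0,-3,0,44; 1,0,0,0,-3,-12; 0,1,0,-3,0,30; 0,0,1,0,-3,2]

private def Gimat : Matrix (Fin 6) (Fin 6) ℤ :=
  !![-18,-3,6,1,0,0; 42,0,-15,0,1,0; -60,-3,20,0,0,1; 44,0,-15,0,0,0; -18,-1,6,0,0,0; 3,0,-1,0,0,0]

/-- for γ = B²A the coefficient of e₆ in γ(v) lies in {1, -1, 2, -2} and v, γ(v), γ⁻¹(v) are linearly independent over ℚ. -/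
theorem entry25_certificate (f g : Polynomial ℤ)
    (hf : f = (Polynomial.X - 1) ^ 6)
    (hg : g = (Polynomial.X ^ 2 + 1) ^ 3)
    (A B : GL (Fin 6) ℤ)
    (hA : (A : Matrix (Fin 6) (Fin 6) ℤ) = companionMat 6 f)
    (hB : (B : Matrix (Fin 6) (Fin 6) ℤ) = companionMat 6 g)
    (v : Fin 6 → ℤ)
    (hv : v = ((A⁻¹ * B : GL (Fin 6) ℤ) : Matrix (Fin 6) (Fin 6) ℤ) *ᵥ
      Pi.single (5 : Fin 6) 1 - Pi.single (5 : Fin 6) 1)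
    (γ : GL (Fin 6) ℤ) (hγ : γ = B ^ 2 * A) :
    v = ![-6, 12, -20, 12, -6, 0] ∧
    ((γ : Matrix (Fin 6) (Fin 6) ℤ) *ᵥ v) 5 ∈ ({1, -1, 2, -2} : Set ℤ) ∧
    LinearIndependent ℚ
      ![(fun i => (v i : ℚ)),
        (fun i => (((γ : Matrix (Fin 6) (Fin 6) ℤ) *ᵥ v) i : ℚ)),
        (fun i => (((↑γ⁻¹ : Matrix (Fin 6) (Fin 6) ℤ) *ᵥ v) i : ℚ))] := by
  have hf' : f = X^6 - 6*X^5 + 15*X^4 - 20*X^3 + 15*X^2 - 6*X + 1 := by rw [hf]; ring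
  have hg' : g = X^6 + 3*X^4 + 3*X^2 + 1 := by rw [hg]; ring
  have hfc : ∀ k : Fin 6, f.coeff (k : ℕ) = ![1,-6,15,-20,15,-6] k := by
    intro k
    rw [hf']
    fin_cases k <;> simp [coeff_X_pow, coeff_one, coeff_X] <;> decide
  have hgc : ∀ k : Fin 6, g.coeff (k : ℕ) = ![1,0,3,0,3,0] k := by
    intro k
    rw [hg']
    fin_cases k <;> simp [coeff_X_pow, coeff_one, coeff_X] <;> decide
  have hA' : (A : Matrix (Fin 6) (Fin 6) ℤ) = Amat := by
    rw [hA, companionMat_eq f _ hfc]; decide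
  have hB' : (B : Matrix (Fin 6) (Fin 6) ℤ) = Bmat := by
    rw [hB, companionMat_eq g _ hgc]; decide
  have hAi : ((A⁻¹ : GL (Fin 6) ℤ) : Matrix (Fin 6) (Fin 6) ℤ) = Aimat := by
    rw [Matrix.coe_units_inv, hA']
    exact Matrix.inv_eq_right_inv (by decide)
  have hG : ((γ : GL (Fin 6) ℤ) : Matrix (Fin 6) (Fin 6) ℤ) = Gmat := by
    rw [hγ]
    have h1 : ((B ^ 2 * A : GL (Fin 6) ℤ) : Matrix (Fin 6) (Fin 6) ℤ)
        = Bmat * Bmat * Amat := by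
      push_cast [hA', hB']
      rw [sq]
    rw [h1]; decide
  have hGi : ((γ⁻¹ : GL (Fin 6) ℤ) : Matrix (Fin 6) (Fin 6) ℤ) = Gimat := by
    rw [Matrix.coe_units_inv, hG]
    exact Matrix.inv_eq_right_inv (by decide)
  have hv' : v = ![-6, 12, -20, 12, -6, 0] := by
    rw [hv]
    have h1 : ((A⁻¹ * B : GL (Fin 6) ℤ) : Matrix (Fin 6) (Fin 6) ℤ) = Aimat * Bmat := by
      push_cast [hAi, hB']
      rfl
    rw [h1]
    decide
  have hgv : (γ : Matrix (Fin 6) (Fin 6) ℤ) *ᵥ v = ![-12, 6, -36, 12, -24, -2] := by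
    rw [hG, hv']; decide
  have hgiv : ((↑γ⁻¹ : Matrix (Fin 6) (Fin 6) ℤ)) *ᵥ v = ![-36, 42, -76, 36, -24, 2] := by
    rw [hGi, hv']; decide
  refine ⟨hv', ?_, ?_⟩
  · have h5 : (![-12, 6, -36, 12, -24, -2] : Fin 6 → ℤ) 5 = -2 := rfl
    rw [hgv, h5]; norm_num
  · have key : LinearIndependent ℚ
        (fun i : Fin 3 => (!![(-6:ℚ),12,-20; -12,6,-36; -36,42,-76]) i) := by
      change LinearIndependent ℚ (Matrix.row !![(-6:ℚ),12,-20; -12,6,-36; -36,42,-76])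
      rw [Matrix.linearIndependent_rows_iff_isUnit, Matrix.isUnit_iff_isUnit_det]
      simp [Matrix.det_fin_three]
      norm_num
    have hcomp :
        (LinearMap.funLeft ℚ ℚ (Fin.castLE (by norm_num : (3:ℕ) ≤ 6))) ∘
          ![(fun i => (v i : ℚ)),
            (fun i => (((γ : Matrix (Fin 6) (Fin 6) ℤ) *ᵥ v) i : ℚ)),
            (fun i => (((↑γ⁻¹ : Matrix (Fin 6) (Fin 6) ℤ) *ᵥ v) i : ℚ))]
        = fun i : Fin 3 => (!![(-6:ℚ),12,-20; -12,6,-36; -36,42,-76]) i := by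
      funext i j
      rw [hgv, hgiv, hv']
      fin_cases i <;> fin_cases j <;>
        simp [LinearMap.funLeft, Fin.castLE] <;> norm_num
    exact (hcomp ▸ key).of_comp (LinearMap.funLeft ℚ ℚ (Fin.castLE (by norm_num)))
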